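/- Let Z be a standard normal random variable, η > 0, c_η = (1/2)·log((1+η)/η), and define h_{2,η}(a) = E[exp(−(a + c_η − Z²/(2(1+η)))_+)]. Then for all a > 0, h_{2,η}(a) = e^{−a}·(2Φ(√(2η(a + c_η))) − 1) + 2·(1 − Φ(√(2(1+η)(a + c_η)))). -/

import Mathlib

open MeasureTheory ProbabilityTheory Real

/-- The standard normal cumulative distribution function. -/
noncomputable def stdPhi (x : ℝ) : ℝ := ((gaussianReal 0 1) (Set.Iic x)).toReal

open scoped NNReal ENNReal

-- helpers
lemma gauss_singleton (x : ℝ) : gaussianReal 0 1 {x} = 0 :=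
  gaussianReal_absolutelyContinuous 0 one_ne_zero (measure_singleton x)

lemma gauss_Iio (x : ℝ) : gaussianReal 0 1 (Set.Iio x) = gaussianReal 0 1 (Set.Iic x) := by
  rw [← Set.Iio_union_right, measure_union (by simp) (measurableSet_singleton x),
    gauss_singleton, add_zero]

lemma stdPhi_neg (x : ℝ) : stdPhi (-x) = 1 - stdPhi x := by
  have hmap : (gaussianReal 0 1).map (fun z : ℝ => (-1 : ℝ) * z) = gaussianReal 0 1 := by
    rw [gaussianReal_map_const_mul]
    norm_num
  have h1 : gaussianReal 0 1 (Set.Iic (-x)) = gaussianReal 0 1 (Set.Ici x) := by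
    conv_lhs => rw [← hmap]
    rw [Measure.map_apply (by fun_prop) measurableSet_Iic]
    congr 1
    ext z
    simp
  have h2 : gaussianReal 0 1 (Set.Ici x) = 1 - gaussianReal 0 1 (Set.Iic x) := by
    rw [← Set.compl_Iio, measure_compl measurableSet_Iio (measure_ne_top _ _), gauss_Iio,
      measure_univ]
  unfold stdPhi
  rw [h1, h2, ENNReal.toReal_sub_of_le (by exact prob_le_one) (by simp)]
  simp

lemma gauss_Ioo (x : ℝ) (hx : 0 < x) :
    ((gaussianReal 0 1) (Set.Ioo (-x) x)).toReal = 2 * stdPhi x - 1 := by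
  have h : Set.Ioo (-x) x = Set.Iio x \ Set.Iic (-x) := by
    ext z; simp only [Set.mem_Ioo, Set.mem_diff, Set.mem_Iio, Set.mem_Iic, not_le]; tauto
  rw [h, measure_diff (Set.Iic_subset_Iio.mpr (by linarith)) measurableSet_Iic.nullMeasurableSet
    (measure_ne_top _ _), gauss_Iio,
    ENNReal.toReal_sub_of_le (by
      apply measure_mono
      intro z hz
      simp at hz ⊢
      linarith) (measure_ne_top _ _)]
  have := stdPhi_neg x
  unfold stdPhi at *
  linarith

lemma gauss_Ioo_compl (x : ℝ) (hx : 0 < x) :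
    ((gaussianReal 0 1) (Set.Ioo (-x) x)ᶜ).toReal = 2 * (1 - stdPhi x) := by
  rw [measure_compl measurableSet_Ioo (measure_ne_top _ _), measure_univ,
    ENNReal.toReal_sub_of_le prob_le_one (by simp), gauss_Ioo x hx]
  simp
  ring

lemma integral_gauss (f : ℝ → ℝ) :
    ∫ z, f z ∂(gaussianReal 0 1) = ∫ z, gaussianPDFReal 0 1 z * f z := by
  rw [gaussianReal_of_var_ne_zero 0 one_ne_zero]
  have h : gaussianPDF 0 1 = fun x => ((gaussianPDFReal 0 1 x).toNNReal : ℝ≥0∞) := rfl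
  rw [h, integral_withDensity_eq_integral_smul
    ((measurable_gaussianPDFReal 0 1).real_toNNReal) f]
  congr 1
  ext z
  rw [NNReal.smul_def, smul_eq_mul, Real.coe_toNNReal _ (gaussianPDFReal_nonneg 0 1 z)]

lemma setIntegral_gaussPDF (v : ℝ≥0) (hv : v ≠ 0) (s : Set ℝ) :
    ∫ z in s, gaussianPDFReal 0 v z = ((gaussianReal 0 v) s).toReal := by
  rw [gaussianReal_apply_eq_integral 0 hv s,
    ENNReal.toReal_ofReal (integral_nonneg (fun z => gaussianPDFReal_nonneg 0 v z))]

lemma gauss_scale_Ioo (c : ℝ) (hc : 0 < c) (t : ℝ) :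
    gaussianReal 0 (⟨c^2, sq_nonneg c⟩ : ℝ≥0) (Set.Ioo (-t) t)
      = gaussianReal 0 1 (Set.Ioo (-(t/c)) (t/c)) := by
  have : gaussianReal 0 (⟨c^2, sq_nonneg c⟩ : ℝ≥0)
      = (gaussianReal 0 1).map (fun z => c * z) := by
    rw [gaussianReal_map_const_mul]
    norm_num
    rfl
  rw [this, Measure.map_apply (by fun_prop) measurableSet_Ioo]
  congr 1
  ext z
  simp only [Set.mem_preimage, Set.mem_Ioo]
  rw [← neg_div, div_lt_iff₀ hc, lt_div_iff₀ hc]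
  constructor <;> intro h <;> constructor <;> nlinarith [h.1, h.2]

/-- `c_η = (1/2)·log((1+η)/η)`. -/
noncomputable def cEta (η : ℝ) : ℝ := (1/2) * Real.log ((1+η)/η)

/-- `h_{2,η}(a) = E[exp(−(a + c_η − Z²/(2(1+η)))_+)]` for `Z` standard normal. -/
noncomputable def h2 (η a : ℝ) : ℝ :=
  ∫ z, Real.exp (-(max (a + cEta η - z^2/(2*(1+η))) 0)) ∂(gaussianReal 0 1)

/-- For `η > 0` and all `a > 0`,
`h_{2,η}(a) = e^{−a}·(2Φ(√(2η(a + c_η))) − 1) + 2·(1 − Φ(√(2(1+η)(a + c_η))))`. -/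
theorem h2_eq (η a : ℝ) (hη : 0 < η) (ha : 0 < a) :
    h2 η a = Real.exp (-a) * (2 * stdPhi (Real.sqrt (2*η*(a + cEta η))) - 1)
      + 2 * (1 - stdPhi (Real.sqrt (2*(1+η)*(a + cEta η)))) := by
  have hw : (0:ℝ) < (1+η)/η := by positivity
  have hb : 0 < a + cEta η := by
    have : 0 < Real.log ((1+η)/η) := Real.log_pos (by rw [lt_div_iff₀ hη]; linarith)
    unfold cEta; linarith
  set t := Real.sqrt (2*(1+η)*(a + cEta η)) with ht_def
  have ht : 0 < t := Real.sqrt_pos.mpr (by positivity)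
  have ht2 : t^2 = 2*(1+η)*(a + cEta η) := Real.sq_sqrt (by positivity)
  set c := Real.sqrt ((1+η)/η) with hc_def
  have hc : 0 < c := Real.sqrt_pos.mpr hw
  have hc2 : c^2 = (1+η)/η := Real.sq_sqrt hw.le
  set F : ℝ → ℝ := fun z => Real.exp (-(max (a + cEta η - z^2/(2*(1+η))) 0)) with hF
  have hFle : ∀ z, ‖F z‖ ≤ 1 := by
    intro z
    rw [Real.norm_eq_abs, abs_of_pos (Real.exp_pos _), Real.exp_le_one_iff]
    simp [le_max_right]
  have hInt : Integrable (fun z => gaussianPDFReal 0 1 z * F z) := by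
    have hcomm : (fun z => gaussianPDFReal 0 1 z * F z)
        = fun z => F z * gaussianPDFReal 0 1 z := by funext z; ring
    rw [hcomm]
    exact (integrable_gaussianPDFReal 0 1).bdd_mul
      (Continuous.aestronglyMeasurable (by fun_prop)) (Filter.Eventually.of_forall hFle)
  have key : h2 η a = ∫ z, gaussianPDFReal 0 1 z * F z := integral_gauss F
  rw [key, ← integral_add_compl (measurableSet_Ioo (a := -t) (b := t)) hInt]
  have hSc : ∫ z in (Set.Ioo (-t) t)ᶜ, gaussianPDFReal 0 1 z * F z
      = 2 * (1 - stdPhi t) := by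
    rw [setIntegral_congr_fun measurableSet_Ioo.compl (g := fun z => gaussianPDFReal 0 1 z)
      (fun z hz => ?_)]
    · rw [setIntegral_gaussPDF 1 one_ne_zero, gauss_Ioo_compl t ht]
    · have hz' : t ≤ z ∨ z ≤ -t := by
        simp only [Set.mem_compl_iff, Set.mem_Ioo, not_and_or, not_lt] at hz
        tauto
      have hz2 : t^2 ≤ z^2 := by rcases hz' with h | h <;> nlinarith
      have hmax : max (a + cEta η - z^2/(2*(1+η))) 0 = 0 := by
        rw [max_eq_right]
        rw [sub_nonpos, le_div_iff₀ (by positivity)]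
        nlinarith
      simp [hF, hmax]
  have hS : ∫ z in Set.Ioo (-t) t, gaussianPDFReal 0 1 z * F z
      = Real.exp (-(a + cEta η)) * c * (2 * stdPhi (t/c) - 1) := by
    rw [setIntegral_congr_fun measurableSet_Ioo
      (g := fun z => Real.exp (-(a + cEta η)) * c *
        gaussianPDFReal 0 (⟨c^2, sq_nonneg c⟩ : ℝ≥0) z) (fun z hz => ?_)]
    · rw [MeasureTheory.integral_const_mul, setIntegral_gaussPDF (⟨c^2, sq_nonneg c⟩ : ℝ≥0) (by
        intro h
        have h' := congrArg NNReal.toReal h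
        rw [NNReal.coe_zero] at h'
        exact (pow_pos hc 2).ne' h'), gauss_scale_Ioo c hc t, gauss_Ioo (t/c) (div_pos ht hc)]
    · obtain ⟨hz1, hz2⟩ := hz
      have hz2' : z^2 < t^2 := by nlinarith
      have hmax : max (a + cEta η - z^2/(2*(1+η))) 0 = a + cEta η - z^2/(2*(1+η)) := by
        rw [max_eq_left]
        rw [sub_nonneg, div_le_iff₀ (by positivity)]
        nlinarith
      simp only [hF, hmax, gaussianPDFReal, NNReal.coe_mk, NNReal.coe_one]
      change (√(2 * π * 1))⁻¹ * rexp (-(z - 0) ^ 2 / (2 * 1)) * rexp (-(a + cEta η - z ^ 2 / (2 * (1 + η))))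
        = rexp (-(a + cEta η)) * c * ((√(2 * π * (c ^ 2)))⁻¹ * rexp (-(z - 0) ^ 2 / (2 * (c ^ 2))))
      rw [hc2]
      have hA : Real.sqrt (2 * π * ((1+η)/η)) = Real.sqrt (2*π) * c := by
        rw [hc_def, ← Real.sqrt_mul (by positivity)]
      have h1η : (1:ℝ) + η ≠ 0 := by positivity
      have hs : Real.sqrt (2*π) ≠ 0 := by positivity
      have hexp : -(z-0)^2/(2*1) + -(a + cEta η - z^2/(2*(1+η)))
          = -(a + cEta η) + (-(z-0)^2/(2*((1+η)/η))) := by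
        field_simp
        ring
      rw [hA, show (2:ℝ)*π*1 = 2*π by ring, mul_assoc, ← Real.exp_add, hexp,
        Real.exp_add]
      field_simp
  rw [hS, hSc]
  have htc : t / c = Real.sqrt (2*η*(a + cEta η)) := by
    rw [ht_def, hc_def, ← Real.sqrt_div (by positivity)]
    congr 1
    field_simp
  have hec : Real.exp (-(a + cEta η)) * c = Real.exp (-a) := by
    rw [neg_add, Real.exp_add]
    have : Real.exp (-cEta η) * c = 1 := by
      rw [hc_def, Real.sqrt_eq_rpow, cEta, show -((1/2) * Real.log ((1+η)/η))
        = Real.log ((1+η)/η) * (-(1/2)) by ring, ← Real.rpow_def_of_pos hw,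
        ← Real.rpow_add hw]
      norm_num
    rw [mul_assoc, this, mul_one]
  rw [htc, hec]
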